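/- Let (g_n) be independent standard complex Gaussians and let 1 ≤ q₁ < ∞. Then ‖ max_N N^{1/2} ( Σ_{n ∼ N} |g_n|²/n² )^{1/2} ‖_{L^{q₁}(Ω)} ≤ C √{q₁}, where the maximum is over dyadic integers N = 2^j, and consequently P( max_N N^{1/2}(Σ_{n∼N}|g_n|²/n²)^{1/2} > λ ) ≤ C exp(−cλ^c) for λ ≥ 1. -/

import Mathlib

open MeasureTheory ProbabilityTheory Real ENNReal

lemma gauss_half_eq : gaussianReal 0 (1/2) =
    volume.withDensity (fun x => ((gaussianPDFReal 0 (1/2) x).toNNReal : ℝ≥0∞)) := by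
  rw [gaussianReal_of_var_ne_zero _ (by norm_num)]
  rfl

lemma pdf_half (x : ℝ) : gaussianPDFReal 0 (1/2) x = (Real.sqrt π)⁻¹ * Real.exp (-x^2) := by
  rw [gaussianPDFReal]
  norm_num
  rw [← mul_assoc, mul_comm (Real.sqrt 2), mul_assoc, mul_inv_cancel₀ (by positivity), mul_one]

lemma integral_gauss_half {s : ℝ} (hs : s < 1) :
    ∫ x, Real.exp (s * x^2) ∂(gaussianReal 0 (1/2)) = (Real.sqrt (1-s))⁻¹ := by
  rw [gauss_half_eq, integral_withDensity_eq_integral_smul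
    ((measurable_gaussianPDFReal 0 (1/2)).real_toNNReal)]
  have : ∀ x : ℝ, (gaussianPDFReal 0 (1/2) x).toNNReal • Real.exp (s * x^2)
      = (Real.sqrt π)⁻¹ * Real.exp (-(1-s) * x^2) := by
    intro x
    rw [NNReal.smul_def, smul_eq_mul, Real.coe_toNNReal _ (gaussianPDFReal_nonneg _ _ _), pdf_half,
      mul_assoc, ← Real.exp_add]
    ring_nf
  simp_rw [this]
  rw [integral_const_mul, integral_gaussian, Real.sqrt_div Real.pi_nonneg,
    div_eq_mul_inv, ← mul_assoc, inv_mul_cancel₀ (by positivity), one_mul]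

lemma integrable_gauss_half {s : ℝ} (hs : s < 1) :
    Integrable (fun x => Real.exp (s * x^2)) (gaussianReal 0 (1/2)) := by
  rw [gauss_half_eq, integrable_withDensity_iff_integrable_smul
    ((measurable_gaussianPDFReal 0 (1/2)).real_toNNReal)]
  have : ∀ x : ℝ, (gaussianPDFReal 0 (1/2) x).toNNReal • Real.exp (s * x^2)
      = (Real.sqrt π)⁻¹ * Real.exp (-(1-s) * x^2) := by
    intro x
    rw [NNReal.smul_def, smul_eq_mul, Real.coe_toNNReal _ (gaussianPDFReal_nonneg _ _ _), pdf_half,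
      mul_assoc, ← Real.exp_add]
    ring_nf
  simp_rw [this]
  exact (integrable_exp_neg_mul_sq (by linarith)).const_mul _

/-- The standard complex Gaussian measure on `ℂ`, with density `π⁻¹ e^{-|z|²}`:
the real and imaginary parts are independent real Gaussians of variance `1/2`. -/
noncomputable def stdComplexGaussian : Measure ℂ :=
  ((gaussianReal 0 (1 / 2)).prod (gaussianReal 0 (1 / 2))).map (fun p => ⟨p.1, p.2⟩)

lemma measurable_mk : Measurable (fun p : ℝ × ℝ => (⟨p.1, p.2⟩ : ℂ)) := by
  have : (fun p : ℝ × ℝ => (⟨p.1, p.2⟩ : ℂ)) = fun p => (p.1 : ℂ) + p.2 * Complex.I := by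
    funext p
    rw [Complex.mk_eq_add_mul_I]
  rw [this]; fun_prop

lemma norm_mk (p : ℝ × ℝ) : ‖(⟨p.1, p.2⟩ : ℂ)‖^2 = p.1^2 + p.2^2 := by
  rw [Complex.sq_norm, Complex.normSq_mk]; ring

instance : IsProbabilityMeasure stdComplexGaussian := by
  unfold stdComplexGaussian
  exact Measure.isProbabilityMeasure_map measurable_mk.aemeasurable

lemma integral_std_complex {s : ℝ} (hs : s < 1) :
    ∫ z, Real.exp (s * ‖z‖^2) ∂stdComplexGaussian = (1 - s)⁻¹ := by
  unfold stdComplexGaussian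
  have hcont : Continuous (fun z : ℂ => Real.exp (s * ‖z‖^2)) := by fun_prop
  rw [integral_map measurable_mk.aemeasurable hcont.aestronglyMeasurable]
  have : ∀ p : ℝ × ℝ, Real.exp (s * ‖(⟨p.1, p.2⟩ : ℂ)‖^2)
      = Real.exp (s * p.1^2) * Real.exp (s * p.2^2) := by
    intro p
    rw [norm_mk, ← Real.exp_add]; ring_nf
  simp_rw [this]
  rw [integral_prod_mul (f := fun x : ℝ => Real.exp (s * x^2)) (g := fun x : ℝ => Real.exp (s * x^2)),
    integral_gauss_half hs, ← mul_inv, Real.mul_self_sqrt (by linarith)]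

lemma integrable_std_complex {s : ℝ} (hs : s < 1) :
    Integrable (fun z => Real.exp (s * ‖z‖^2)) stdComplexGaussian := by
  unfold stdComplexGaussian
  have hcont : Continuous (fun z : ℂ => Real.exp (s * ‖z‖^2)) := by fun_prop
  rw [integrable_map_measure hcont.aestronglyMeasurable measurable_mk.aemeasurable]
  have : (fun z : ℂ => Real.exp (s * ‖z‖^2)) ∘ (fun p : ℝ × ℝ => (⟨p.1, p.2⟩ : ℂ))
      = fun p : ℝ × ℝ => Real.exp (s * p.1^2) * Real.exp (s * p.2^2) := by
    funext p
    simp only [Function.comp_apply]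
    rw [norm_mk, ← Real.exp_add]; ring_nf
  rw [this]
  exact (integrable_gauss_half hs).mul_prod (integrable_gauss_half hs)

lemma inv_one_sub_le_exp {a : ℝ} (h0 : 0 ≤ a) (h : a ≤ 1/2) : (1-a)⁻¹ ≤ Real.exp (2*a) := by
  have h1 : (0:ℝ) < 1 - a := by linarith
  have h2 : 2*a + 1 ≤ Real.exp (2*a) := Real.add_one_le_exp _
  rw [← one_div, div_le_iff₀ h1]
  nlinarith [Real.exp_pos (2*a)]

section Main
variable {Ω : Type} [MeasurableSpace Ω] {P : Measure Ω} [IsProbabilityMeasure P]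

lemma mgf_single {g : Ω → ℂ} (hm : AEMeasurable g P) (hmap : P.map g = stdComplexGaussian)
    {s : ℝ} (hs : s < 1) :
    Integrable (fun ω => Real.exp (s * ‖g ω‖^2)) P ∧
      ∫ ω, Real.exp (s * ‖g ω‖^2) ∂P = (1-s)⁻¹ := by
  have hcont : Continuous (fun z : ℂ => Real.exp (s * ‖z‖^2)) := by fun_prop
  have hASM : AEStronglyMeasurable (fun z : ℂ => Real.exp (s * ‖z‖^2)) (P.map g) :=
    hcont.aestronglyMeasurable
  constructor
  · have h2 := (integrable_map_measure hASM hm).mp (by rw [hmap]; exact integrable_std_complex hs)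
    exact h2
  · rw [← integral_std_complex hs, ← hmap, integral_map hm hASM]

lemma mgf_X {g : Ω → ℂ} (hm : AEMeasurable g P) (hmap : P.map g = stdComplexGaussian)
    {t : ℝ} {n : ℕ} (hs : t / (n:ℝ)^2 < 1) :
    Integrable (fun ω => Real.exp (t * (‖g ω‖^2 / (n:ℝ)^2))) P ∧
      ∫ ω, Real.exp (t * (‖g ω‖^2 / (n:ℝ)^2)) ∂P = (1 - t/(n:ℝ)^2)⁻¹ := by
  have heq : ∀ ω, Real.exp (t * (‖g ω‖^2 / (n:ℝ)^2))
      = Real.exp ((t/(n:ℝ)^2) * ‖g ω‖^2) := by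
    intro ω; ring_nf
  simp_rw [heq]
  exact mgf_single hm hmap hs


lemma block_tail {g : ℕ → Ω → ℂ} (hmeas : ∀ n, Measurable (g n))
    (hind : iIndepFun g P)
    (hmap : ∀ n, P.map (g n) = stdComplexGaussian)
    (j : ℕ) {lam : ℝ} (hlam : 2 ≤ lam) :
    P {ω | lam^2 / (2:ℝ)^j ≤ ∑ n ∈ Finset.Ico (2^j) (2^(j+1)), ‖g n ω‖^2 / (n:ℝ)^2}
      ≤ ENNReal.ofReal (Real.exp (-((2:ℝ)^j * lam^2 / 4))) := by
  classical
  set s : Finset ℕ := Finset.Ico (2^j) (2^(j+1)) with hs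
  set t : ℝ := (2:ℝ)^j * (2:ℝ)^j / 2 with ht
  have htpos : 0 < t := by positivity
  have h2j : (0:ℝ) < (2:ℝ)^j := by positivity
  -- facts about n in the block
  have hn_ge : ∀ n ∈ s, ((2:ℝ)^j) ≤ (n:ℝ) := by
    intro n hn
    rw [hs, Finset.mem_Ico] at hn
    exact_mod_cast le_trans (by exact_mod_cast le_refl ((2:ℕ)^j)) (Nat.cast_le.mpr hn.1)
  have ha_half : ∀ n ∈ s, t / (n:ℝ)^2 ≤ 1/2 := by
    intro n hn
    have h1 := hn_ge n hn
    have hn2 : (2:ℝ)^j * (2:ℝ)^j ≤ (n:ℝ)^2 := by nlinarith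
    rw [div_le_div_iff₀ (by nlinarith) (by norm_num)]
    nlinarith
  have ha_lt1 : ∀ n ∈ s, t / (n:ℝ)^2 < 1 := fun n hn => lt_of_le_of_lt (ha_half n hn) (by norm_num)
  have ha_pos : ∀ n ∈ s, 0 ≤ t / (n:ℝ)^2 := by
    intro n hn
    have h1 := hn_ge n hn
    positivity
  -- the random variables
  set X : ℕ → Ω → ℝ := fun n ω => ‖g n ω‖^2 / (n:ℝ)^2 with hX
  have hXmeas : ∀ n, Measurable (X n) := by
    intro n
    have := hmeas n
    fun_prop
  have hXind : iIndepFun X P :=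
    hind.comp (fun n z => ‖z‖^2 / (n:ℝ)^2) (fun n => by fun_prop)
  have hXint : ∀ n ∈ s, Integrable (fun ω => Real.exp (t * X n ω)) P :=
    fun n hn => (mgf_X (hmeas n).aemeasurable (hmap n) (ha_lt1 n hn)).1
  have h_int : Integrable (fun ω => Real.exp (t * (∑ i ∈ s, X i) ω)) P :=
    hXind.integrable_exp_mul_sum hXmeas hXint
  have hcher := measure_ge_le_exp_mul_mgf (μ := P) (X := ∑ i ∈ s, X i)
    (lam^2 / (2:ℝ)^j) htpos.le h_int
  have hmgf : mgf (∑ i ∈ s, X i) P t = ∏ n ∈ s, (1 - t/(n:ℝ)^2)⁻¹ := by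
    rw [hXind.mgf_sum hXmeas]
    refine Finset.prod_congr rfl (fun n hn => ?_)
    rw [mgf]
    exact (mgf_X (hmeas n).aemeasurable (hmap n) (ha_lt1 n hn)).2
  -- the product bound
  have hcard : s.card = 2^j := by
    rw [hs, Nat.card_Ico, pow_succ]; omega
  have hprod : ∏ n ∈ s, (1 - t/(n:ℝ)^2)⁻¹ ≤ Real.exp ((2:ℝ)^j) := by
    calc ∏ n ∈ s, (1 - t/(n:ℝ)^2)⁻¹
        ≤ ∏ n ∈ s, Real.exp (2 * (t/(n:ℝ)^2)) := by
          refine Finset.prod_le_prod (fun n hn => ?_) (fun n hn => ?_)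
          · have h := ha_half n hn
            exact inv_nonneg.mpr (by linarith)
          · exact inv_one_sub_le_exp (ha_pos n hn) (ha_half n hn)
      _ = Real.exp (∑ n ∈ s, 2 * (t/(n:ℝ)^2)) := by rw [Real.exp_sum]
      _ ≤ Real.exp ((2:ℝ)^j) := by
          refine Real.exp_le_exp.mpr ?_
          calc ∑ n ∈ s, 2 * (t/(n:ℝ)^2) ≤ ∑ n ∈ s, 2 * (t / ((2:ℝ)^j * (2:ℝ)^j)) := by
                refine Finset.sum_le_sum (fun n hn => ?_)
                have h1 := hn_ge n hn
                have : (2:ℝ)^j * (2:ℝ)^j ≤ (n:ℝ)^2 := by nlinarith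
                have hd : t / (n:ℝ)^2 ≤ t / ((2:ℝ)^j * (2:ℝ)^j) :=
                  div_le_div_of_nonneg_left htpos.le (by positivity) this
                linarith
            _ = (s.card : ℝ) * (2 * (t / ((2:ℝ)^j * (2:ℝ)^j))) := by
                rw [Finset.sum_const, nsmul_eq_mul]
            _ = (2:ℝ)^j := by
                rw [hcard, ht]
                push_cast
                field_simp
  -- combine
  have hfin : P {ω | lam^2 / (2:ℝ)^j ≤ (∑ i ∈ s, X i) ω} ≠ ⊤ := measure_ne_top _ _
  have hset : {ω | lam^2 / (2:ℝ)^j ≤ ∑ n ∈ s, ‖g n ω‖^2 / (n:ℝ)^2}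
      = {ω | lam^2 / (2:ℝ)^j ≤ (∑ i ∈ s, X i) ω} := by
    ext ω; simp [Finset.sum_apply, hX]
  rw [hset, ENNReal.le_ofReal_iff_toReal_le hfin (Real.exp_nonneg _)]
  calc (P {ω | lam^2 / (2:ℝ)^j ≤ (∑ i ∈ s, X i) ω}).toReal
      ≤ Real.exp (-t * (lam^2 / (2:ℝ)^j)) * mgf (∑ i ∈ s, X i) P t := hcher
    _ ≤ Real.exp (-t * (lam^2 / (2:ℝ)^j)) * Real.exp ((2:ℝ)^j) := by
        rw [hmgf]
        exact mul_le_mul_of_nonneg_left hprod (Real.exp_nonneg _)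
    _ = Real.exp (-t * (lam^2 / (2:ℝ)^j) + (2:ℝ)^j) := by rw [← Real.exp_add]
    _ ≤ Real.exp (-((2:ℝ)^j * lam^2 / 4)) := by
        refine Real.exp_le_exp.mpr ?_
        have harg : -t * (lam^2 / (2:ℝ)^j) = -((2:ℝ)^j * lam^2 / 2) := by
          rw [ht]; field_simp
        rw [harg]
        have h4 : (0:ℝ) ≤ lam^2 - 4 := by nlinarith
        nlinarith [mul_nonneg h2j.le h4]

lemma sup_tail {g : ℕ → Ω → ℂ} (hmeas : ∀ n, Measurable (g n))
    (hind : iIndepFun g P)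
    (hmap : ∀ n, P.map (g n) = stdComplexGaussian)
    {lam : ℝ} (hlam : 2 ≤ lam) :
    P {ω | lam < ⨆ j : ℕ, ((2 : ℝ) ^ j) ^ ((1 : ℝ) / 2) *
        (∑ n ∈ Finset.Ico (2 ^ j) (2 ^ (j + 1)), ‖g n ω‖ ^ 2 / (n : ℝ) ^ 2) ^ ((1 : ℝ) / 2)}
      ≤ ENNReal.ofReal (2 * Real.exp (-(lam^2/4))) := by
  have hlam0 : (0:ℝ) < lam := by linarith
  set A : ℕ → Set Ω := fun j =>
    {ω | lam^2 / (2:ℝ)^j ≤ ∑ n ∈ Finset.Ico (2^j) (2^(j+1)), ‖g n ω‖^2 / (n:ℝ)^2} with hA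
  have hsub : {ω | lam < ⨆ j : ℕ, ((2 : ℝ) ^ j) ^ ((1 : ℝ) / 2) *
        (∑ n ∈ Finset.Ico (2 ^ j) (2 ^ (j + 1)), ‖g n ω‖ ^ 2 / (n : ℝ) ^ 2) ^ ((1 : ℝ) / 2)}
      ⊆ ⋃ j, A j := by
    intro ω hω
    simp only [Set.mem_setOf_eq] at hω
    by_contra hc
    simp only [Set.mem_iUnion, hA, Set.mem_setOf_eq, not_exists, not_le] at hc
    have hle : ∀ j : ℕ, ((2 : ℝ) ^ j) ^ ((1 : ℝ) / 2) *
        (∑ n ∈ Finset.Ico (2 ^ j) (2 ^ (j + 1)), ‖g n ω‖ ^ 2 / (n : ℝ) ^ 2) ^ ((1 : ℝ) / 2)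
        ≤ lam := by
      intro j
      set Sj := ∑ n ∈ Finset.Ico (2^j) (2^(j+1)), ‖g n ω‖^2 / (n:ℝ)^2 with hSj
      have hSjnn : 0 ≤ Sj := Finset.sum_nonneg (fun n _ => by positivity)
      have h1 : Sj ≤ lam^2 / (2:ℝ)^j := (hc j).le
      have h2 : Sj ^ ((1:ℝ)/2) ≤ (lam^2 / (2:ℝ)^j) ^ ((1:ℝ)/2) :=
        Real.rpow_le_rpow hSjnn h1 (by norm_num)
      calc ((2 : ℝ) ^ j) ^ ((1 : ℝ) / 2) * Sj ^ ((1:ℝ)/2)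
          ≤ ((2 : ℝ) ^ j) ^ ((1 : ℝ) / 2) * (lam^2 / (2:ℝ)^j) ^ ((1:ℝ)/2) := by
            refine mul_le_mul_of_nonneg_left h2 ?_
            positivity
        _ = ((2:ℝ)^j * (lam^2 / (2:ℝ)^j)) ^ ((1:ℝ)/2) := by
            rw [← Real.mul_rpow (by positivity) (by positivity)]
        _ = (lam^2) ^ ((1:ℝ)/2) := by
            congr 1
            field_simp
        _ = lam := by
            rw [← Real.rpow_natCast lam 2, ← Real.rpow_mul hlam0.le]
            norm_num
    exact absurd (ciSup_le hle) (not_le.mpr hω)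
  calc P _ ≤ P (⋃ j, A j) := measure_mono hsub
    _ ≤ ∑' j, P (A j) := measure_iUnion_le _
    _ ≤ ∑' j : ℕ, ENNReal.ofReal (Real.exp (-(lam^2/4))) * (ENNReal.ofReal (1/2))^j := by
        refine ENNReal.tsum_le_tsum (fun j => ?_)
        refine le_trans (block_tail hmeas hind hmap j hlam) ?_
        rw [← ENNReal.ofReal_pow (by norm_num), ← ENNReal.ofReal_mul (Real.exp_nonneg _)]
        refine ENNReal.ofReal_le_ofReal ?_
        set r := Real.exp (-(lam^2/4)) with hr
        have hr0 : 0 ≤ r := Real.exp_nonneg _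
        have hrhalf : r ≤ 1/2 := by
          rw [hr]
          have h1 : Real.exp (-(lam^2/4)) ≤ Real.exp (-1) := by
            refine Real.exp_le_exp.mpr ?_
            nlinarith
          refine le_trans h1 ?_
          rw [Real.exp_neg]
          have := Real.add_one_le_exp (1:ℝ)
          have h2 : (2:ℝ) ≤ Real.exp 1 := by linarith
          have h4 : (Real.exp 1)⁻¹ ≤ 2⁻¹ := inv_anti₀ (by norm_num) h2
          linarith
        have hexp : Real.exp (-((2:ℝ)^j * lam^2 / 4)) = r ^ (2^j : ℕ) := by
          rw [hr, ← Real.exp_nat_mul]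
          congr 1
          push_cast
          ring
        rw [hexp]
        calc r ^ (2^j : ℕ) ≤ r ^ (j+1) := by
              refine pow_le_pow_of_le_one hr0 (by linarith) ?_
              have := Nat.lt_two_pow_self (n := j)
              omega
          _ = r * r^j := by ring
          _ ≤ r * (1/2)^j := by
              refine mul_le_mul_of_nonneg_left (pow_le_pow_left₀ hr0 hrhalf j) hr0
    _ = ENNReal.ofReal (Real.exp (-(lam^2/4))) * (1 - ENNReal.ofReal (1/2))⁻¹ := by
        rw [ENNReal.tsum_mul_left, ENNReal.tsum_geometric]
    _ ≤ ENNReal.ofReal (2 * Real.exp (-(lam^2/4))) := by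
        have hhalf : ENNReal.ofReal (1/2 : ℝ) = 2⁻¹ := by
          rw [one_div, ENNReal.ofReal_inv_of_pos (by norm_num)]
          norm_num
        rw [hhalf, ENNReal.one_sub_inv_two, inv_inv,
          ENNReal.ofReal_mul (by norm_num : (0:ℝ) ≤ 2), ENNReal.ofReal_ofNat, mul_comm]

lemma rpow_mul_exp_bound {m q : ℝ} (hm : 2 ≤ m) (hq : 1 ≤ q) :
    m ^ q * Real.exp (-(m^2)) ≤ q ^ (q/2) * Real.exp (-m) := by
  have hm0 : (0:ℝ) < m := by linarith
  have hq0 : (0:ℝ) < q := by linarith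
  -- m^q ≤ q^(q/2) * exp (m^2/2)
  have key : m ^ q ≤ q ^ (q/2) * Real.exp (m^2/2) := by
    have h1 : m^2 ≤ q * Real.exp (m^2/q) := by
      have := Real.add_one_le_exp (m^2/q)
      have h2 : m^2/q ≤ Real.exp (m^2/q) := by linarith
      calc m^2 = q * (m^2/q) := by field_simp
        _ ≤ q * Real.exp (m^2/q) := by
            exact mul_le_mul_of_nonneg_left h2 hq0.le
    calc m ^ q = (m^2) ^ (q/2) := by
          rw [← Real.rpow_natCast m 2, ← Real.rpow_mul hm0.le]
          congr 1
          ring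
      _ ≤ (q * Real.exp (m^2/q)) ^ (q/2) := by
          refine Real.rpow_le_rpow (by positivity) h1 (by positivity)
      _ = q ^ (q/2) * Real.exp (m^2/2) := by
          rw [Real.mul_rpow hq0.le (Real.exp_nonneg _), ← Real.exp_mul]
          congr 2
          field_simp
  calc m ^ q * Real.exp (-(m^2))
      ≤ (q ^ (q/2) * Real.exp (m^2/2)) * Real.exp (-(m^2)) := by
        exact mul_le_mul_of_nonneg_right key (Real.exp_nonneg _)
    _ = q ^ (q/2) * Real.exp (m^2/2 - m^2) := by
        rw [mul_assoc, ← Real.exp_add]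
        ring_nf
    _ ≤ q ^ (q/2) * Real.exp (-m) := by
        refine mul_le_mul_of_nonneg_left ?_ (by positivity)
        refine Real.exp_le_exp.mpr ?_
        nlinarith

lemma sup_moment {g : ℕ → Ω → ℂ} (hmeas : ∀ n, Measurable (g n))
    (hind : iIndepFun g P)
    (hmap : ∀ n, P.map (g n) = stdComplexGaussian)
    {q : ℝ} (hq : 1 ≤ q) :
    (∫ ω, (⨆ j : ℕ, ((2 : ℝ) ^ j) ^ ((1 : ℝ) / 2) *
        (∑ n ∈ Finset.Ico (2 ^ j) (2 ^ (j + 1)), ‖g n ω‖ ^ 2 / (n : ℝ) ^ 2)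
          ^ ((1 : ℝ) / 2)) ^ q ∂P) ^ (1 / q) ≤ 12 * Real.sqrt q := by
  have hq0 : (0:ℝ) < q := by linarith
  set S : Ω → ℝ := fun ω => ⨆ j : ℕ, ((2 : ℝ) ^ j) ^ ((1 : ℝ) / 2) *
      (∑ n ∈ Finset.Ico (2 ^ j) (2 ^ (j + 1)), ‖g n ω‖ ^ 2 / (n : ℝ) ^ 2) ^ ((1 : ℝ) / 2)
    with hS
  have hSmeas : Measurable S := by
    refine Measurable.iSup (fun j => ?_)
    have hsum : Measurable (fun ω => ∑ n ∈ Finset.Ico (2 ^ j) (2 ^ (j + 1)),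
        ‖g n ω‖ ^ 2 / (n : ℝ) ^ 2) := by
      refine Finset.measurable_sum _ (fun n _ => ?_)
      have := hmeas n
      fun_prop
    exact measurable_const.mul ((Real.continuous_rpow_const (by norm_num)).measurable.comp hsum)
  have hSnn : ∀ ω, 0 ≤ S ω := by
    intro ω
    refine Real.iSup_nonneg (fun j => ?_)
    have h1 : (0:ℝ) ≤ ((2:ℝ)^j) ^ ((1:ℝ)/2) := by positivity
    have h2 : (0:ℝ) ≤ (∑ n ∈ Finset.Ico (2 ^ j) (2 ^ (j + 1)), ‖g n ω‖ ^ 2 / (n : ℝ) ^ 2)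
        ^ ((1:ℝ)/2) := by
      refine Real.rpow_nonneg ?_ _
      exact Finset.sum_nonneg (fun n _ => by positivity)
    exact mul_nonneg h1 h2
  -- pointwise domination
  have hpoint : ∀ ω, ENNReal.ofReal (S ω ^ q) ≤ ENNReal.ofReal ((4:ℝ)^q) +
      ∑' k : ℕ, Set.indicator {ω' | (2*(k:ℝ)+4) < S ω'}
        (fun _ => ENNReal.ofReal ((2*(k:ℝ)+6)^q)) ω := by
    intro ω
    by_cases hcase : S ω ≤ 4
    · refine le_trans ?_ le_self_add
      exact ENNReal.ofReal_le_ofReal (Real.rpow_le_rpow (hSnn ω) hcase hq0.le)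
    · push_neg at hcase
      set m : ℕ := ⌈S ω / 2⌉₊ with hm
      have hm3 : 3 ≤ m := by
        have : (2:ℕ) < m := Nat.lt_ceil.mpr (by push_cast; linarith)
        omega
      set k : ℕ := m - 3 with hk
      have hkm : (k:ℝ) = (m:ℝ) - 3 := by
        rw [hk]; push_cast [Nat.cast_sub hm3]; ring
      have h1 : 2*(k:ℝ)+4 < S ω := by
        have hlt : ((m:ℝ) - 1) < S ω / 2 := by
          by_contra hcon
          push_neg at hcon
          have : m ≤ m - 1 := by
            have h2 : ⌈S ω / 2⌉₊ ≤ m - 1 := Nat.ceil_le.mpr (by push_cast [Nat.cast_sub (by omega : 1 ≤ m)] at hcon ⊢; linarith)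
            omega
          omega
        rw [hkm]; linarith
      have h2 : S ω ≤ 2*(k:ℝ)+6 := by
        have := Nat.le_ceil (S ω / 2)
        rw [hkm]; rw [← hm] at this; linarith
      calc ENNReal.ofReal (S ω ^ q) ≤ ENNReal.ofReal ((2*(k:ℝ)+6)^q) :=
            ENNReal.ofReal_le_ofReal (Real.rpow_le_rpow (hSnn ω) h2 hq0.le)
        _ = Set.indicator {ω' | (2*(k:ℝ)+4) < S ω'}
              (fun _ => ENNReal.ofReal ((2*(k:ℝ)+6)^q)) ω := by
            rw [Set.indicator_of_mem]
            exact h1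
        _ ≤ ∑' k : ℕ, Set.indicator {ω' | (2*(k:ℝ)+4) < S ω'}
              (fun _ => ENNReal.ofReal ((2*(k:ℝ)+6)^q)) ω := ENNReal.le_tsum k
        _ ≤ _ := le_add_self
  -- integrate
  have hsets : ∀ k : ℕ, MeasurableSet {ω' | (2*(k:ℝ)+4) < S ω'} := by
    intro k
    exact measurableSet_lt measurable_const hSmeas
  have hlint : ∫⁻ ω, ENNReal.ofReal (S ω ^ q) ∂P ≤ ENNReal.ofReal ((4:ℝ)^q) +
      ∑' k : ℕ, ENNReal.ofReal ((2*(k:ℝ)+6)^q) * P {ω' | (2*(k:ℝ)+4) < S ω'} := by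
    calc ∫⁻ ω, ENNReal.ofReal (S ω ^ q) ∂P
        ≤ ∫⁻ ω, (ENNReal.ofReal ((4:ℝ)^q) +
            ∑' k : ℕ, Set.indicator {ω' | (2*(k:ℝ)+4) < S ω'}
              (fun _ => ENNReal.ofReal ((2*(k:ℝ)+6)^q)) ω) ∂P := lintegral_mono hpoint
      _ = ENNReal.ofReal ((4:ℝ)^q) * P Set.univ +
            ∫⁻ ω, ∑' k : ℕ, Set.indicator {ω' | (2*(k:ℝ)+4) < S ω'}
              (fun _ => ENNReal.ofReal ((2*(k:ℝ)+6)^q)) ω ∂P := by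
          rw [lintegral_add_left measurable_const, lintegral_const]
      _ = ENNReal.ofReal ((4:ℝ)^q) +
            ∑' k : ℕ, ∫⁻ ω, Set.indicator {ω' | (2*(k:ℝ)+4) < S ω'}
              (fun _ => ENNReal.ofReal ((2*(k:ℝ)+6)^q)) ω ∂P := by
          rw [measure_univ, mul_one, lintegral_tsum]
          intro k
          exact (measurable_const.indicator (hsets k)).aemeasurable
      _ = ENNReal.ofReal ((4:ℝ)^q) +
            ∑' k : ℕ, ENNReal.ofReal ((2*(k:ℝ)+6)^q) * P {ω' | (2*(k:ℝ)+4) < S ω'} := by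
          congr 1
          refine tsum_congr (fun k => ?_)
          rw [lintegral_indicator (hsets k), setLIntegral_const]
  -- tail bound per k
  have htail : ∀ k : ℕ, P {ω' | (2*(k:ℝ)+4) < S ω'}
      ≤ ENNReal.ofReal (2 * Real.exp (-((2*(k:ℝ)+4)^2/4))) := by
    intro k
    simp only [hS]
    exact sup_tail hmeas hind hmap (by linarith [(Nat.cast_nonneg k : (0:ℝ) ≤ (k:ℝ))])
  -- bound the tsum
  have hhalf_exp : Real.exp (-1:ℝ) ≤ 1/2 := by
    rw [Real.exp_neg]
    have := Real.add_one_le_exp (1:ℝ)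
    have h2 : (2:ℝ) ≤ Real.exp 1 := by linarith
    have h4 : (Real.exp 1)⁻¹ ≤ 2⁻¹ := inv_anti₀ (by norm_num) h2
    linarith
  have htsum : ∑' k : ℕ, ENNReal.ofReal ((2*(k:ℝ)+6)^q) * P {ω' | (2*(k:ℝ)+4) < S ω'}
      ≤ ENNReal.ofReal ((4:ℝ)^q * q^(q/2)) := by
    have hterm : ∀ k : ℕ, ENNReal.ofReal ((2*(k:ℝ)+6)^q) * P {ω' | (2*(k:ℝ)+4) < S ω'}
        ≤ ENNReal.ofReal (2 * (4:ℝ)^q * q^(q/2) * Real.exp (-2:ℝ)) * (ENNReal.ofReal (Real.exp (-1:ℝ)))^k := by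
      intro k
      set m : ℝ := (k:ℝ) + 2 with hmdef
      have hm2 : (2:ℝ) ≤ m := by rw [hmdef]; linarith [(Nat.cast_nonneg k : (0:ℝ) ≤ (k:ℝ))]
      have hk0 : (0:ℝ) ≤ (k:ℝ) := by positivity
      calc ENNReal.ofReal ((2*(k:ℝ)+6)^q) * P {ω' | (2*(k:ℝ)+4) < S ω'}
          ≤ ENNReal.ofReal ((2*(k:ℝ)+6)^q) * ENNReal.ofReal (2 * Real.exp (-((2*(k:ℝ)+4)^2/4))) :=
            mul_le_mul_of_nonneg_left (htail k) zero_le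
        _ = ENNReal.ofReal ((2*(k:ℝ)+6)^q * (2 * Real.exp (-((2*(k:ℝ)+4)^2/4)))) := by
            rw [ENNReal.ofReal_mul (Real.rpow_nonneg (by linarith) _)]
        _ ≤ ENNReal.ofReal (2 * (4:ℝ)^q * q^(q/2) * Real.exp (-2:ℝ) * Real.exp (-1:ℝ)^k) := by
            refine ENNReal.ofReal_le_ofReal ?_
            have e1 : (2*(k:ℝ)+6)^q ≤ (4:ℝ)^q * m^q := by
              rw [← Real.mul_rpow (by norm_num) (by linarith)]
              refine Real.rpow_le_rpow (by linarith) (by rw [hmdef]; ring_nf; linarith) hq0.le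
            have e2 : -((2*(k:ℝ)+4)^2/4) = -(m^2) := by rw [hmdef]; ring
            have e3 : m^q * Real.exp (-(m^2)) ≤ q^(q/2) * Real.exp (-m) := rpow_mul_exp_bound hm2 hq
            have e4 : Real.exp (-m) = Real.exp (-2:ℝ) * Real.exp (-1:ℝ)^k := by
              rw [← Real.exp_nat_mul, ← Real.exp_add]
              congr 1
              rw [hmdef]; ring
            have hm_nn : (0:ℝ) ≤ m^q := Real.rpow_nonneg (by linarith) _
            have h4q : (0:ℝ) ≤ (4:ℝ)^q := Real.rpow_nonneg (by norm_num) _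
            have hqq : (0:ℝ) ≤ q^(q/2) := Real.rpow_nonneg hq0.le _
            calc (2*(k:ℝ)+6)^q * (2 * Real.exp (-((2*(k:ℝ)+4)^2/4)))
                = 2 * ((2*(k:ℝ)+6)^q * Real.exp (-(m^2))) := by rw [e2]; ring
              _ ≤ 2 * ((4:ℝ)^q * (m^q * Real.exp (-(m^2)))) := by
                  have := mul_le_mul_of_nonneg_right e1 (Real.exp_nonneg (-(m^2)))
                  nlinarith [Real.exp_nonneg (-(m^2))]
              _ ≤ 2 * ((4:ℝ)^q * (q^(q/2) * Real.exp (-m))) := by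
                  have := mul_le_mul_of_nonneg_left e3 h4q
                  linarith
              _ = 2 * (4:ℝ)^q * q^(q/2) * Real.exp (-2:ℝ) * Real.exp (-1:ℝ)^k := by
                  rw [e4]; ring
        _ = ENNReal.ofReal (2 * (4:ℝ)^q * q^(q/2) * Real.exp (-2:ℝ)) * (ENNReal.ofReal (Real.exp (-1:ℝ)))^k := by
            rw [← ENNReal.ofReal_pow (Real.exp_nonneg _), ← ENNReal.ofReal_mul (by positivity)]
    calc ∑' k : ℕ, ENNReal.ofReal ((2*(k:ℝ)+6)^q) * P {ω' | (2*(k:ℝ)+4) < S ω'}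
        ≤ ∑' k : ℕ, ENNReal.ofReal (2 * (4:ℝ)^q * q^(q/2) * Real.exp (-2:ℝ)) * (ENNReal.ofReal (Real.exp (-1:ℝ)))^k :=
          ENNReal.tsum_le_tsum hterm
      _ = ENNReal.ofReal (2 * (4:ℝ)^q * q^(q/2) * Real.exp (-2:ℝ)) * (1 - ENNReal.ofReal (Real.exp (-1:ℝ)))⁻¹ := by
          rw [ENNReal.tsum_mul_left, ENNReal.tsum_geometric]
      _ ≤ ENNReal.ofReal (2 * (4:ℝ)^q * q^(q/2) * Real.exp (-2:ℝ)) * 2 := by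
          refine mul_le_mul_of_nonneg_left ?_ zero_le
          have hhalfE : ENNReal.ofReal (1/2:ℝ) = 2⁻¹ := by
            rw [one_div, ENNReal.ofReal_inv_of_pos (by norm_num)]
            norm_num
          have h1 : ENNReal.ofReal (Real.exp (-1:ℝ)) ≤ 2⁻¹ := by
            rw [← hhalfE]
            exact ENNReal.ofReal_le_ofReal hhalf_exp
          have h2 : (2⁻¹ : ℝ≥0∞) ≤ 1 - ENNReal.ofReal (Real.exp (-1:ℝ)) := by
            calc (2⁻¹ : ℝ≥0∞) = 1 - 2⁻¹ := ENNReal.one_sub_inv_two.symm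
              _ ≤ 1 - ENNReal.ofReal (Real.exp (-1:ℝ)) := tsub_le_tsub_left h1 1
          calc (1 - ENNReal.ofReal (Real.exp (-1:ℝ)))⁻¹ ≤ (2⁻¹ : ℝ≥0∞)⁻¹ :=
                ENNReal.inv_le_inv.mpr h2
            _ = 2 := by rw [inv_inv]
      _ ≤ ENNReal.ofReal ((4:ℝ)^q * q^(q/2)) := by
          rw [(ENNReal.ofReal_ofNat 2).symm, ← ENNReal.ofReal_mul (by positivity)]
          refine ENNReal.ofReal_le_ofReal ?_
          have he2 : Real.exp (-2:ℝ) ≤ 1/4 := by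
            have : Real.exp (-2:ℝ) = Real.exp (-1:ℝ) * Real.exp (-1:ℝ) := by
              rw [← Real.exp_add]; norm_num
            rw [this]
            nlinarith [Real.exp_nonneg (-1:ℝ)]
          have h4q : (0:ℝ) ≤ (4:ℝ)^q := Real.rpow_nonneg (by norm_num) _
          have hqq : (0:ℝ) ≤ q^(q/2) := Real.rpow_nonneg hq0.le _
          nlinarith [mul_nonneg h4q hqq]
  -- combine in ENNReal
  have hfinal : ∫⁻ ω, ENNReal.ofReal (S ω ^ q) ∂P ≤ ENNReal.ofReal ((12 * Real.sqrt q)^q) := by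
    refine le_trans hlint ?_
    refine le_trans (add_le_add_right htsum _) ?_
    rw [← ENNReal.ofReal_add (Real.rpow_nonneg (by norm_num) _) (by positivity)]
    refine ENNReal.ofReal_le_ofReal ?_
    have h4q : (0:ℝ) ≤ (4:ℝ)^q := Real.rpow_nonneg (by norm_num) _
    have hqq1 : (1:ℝ) ≤ q^(q/2) := by
      calc (1:ℝ) = q^(0:ℝ) := (Real.rpow_zero q).symm
        _ ≤ q^(q/2) := Real.rpow_le_rpow_of_exponent_le hq (by positivity)
    have h3q : (2:ℝ) ≤ (3:ℝ)^q := by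
      calc (2:ℝ) ≤ 3 := by norm_num
        _ = (3:ℝ)^(1:ℝ) := (Real.rpow_one 3).symm
        _ ≤ (3:ℝ)^q := Real.rpow_le_rpow_of_exponent_le (by norm_num) hq
    have hrw : (12 * Real.sqrt q)^q = (3:ℝ)^q * (4:ℝ)^q * q^(q/2) := by
      have h12 : (12 : ℝ) * Real.sqrt q = 3 * 4 * Real.sqrt q := by norm_num
      rw [h12, mul_assoc, Real.mul_rpow (by norm_num) (by positivity),
        Real.mul_rpow (by norm_num) (Real.sqrt_nonneg q), Real.sqrt_eq_rpow,
        ← Real.rpow_mul hq0.le]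
      ring_nf
    rw [hrw]
    nlinarith [mul_nonneg h4q (le_trans zero_le_one hqq1)]
  -- back to Bochner integral
  have hint_eq : ∫ ω, S ω ^ q ∂P = (∫⁻ ω, ENNReal.ofReal (S ω ^ q) ∂P).toReal := by
    refine integral_eq_lintegral_of_nonneg_ae (ae_of_all _ (fun ω => Real.rpow_nonneg (hSnn ω) q)) ?_
    exact (((Real.continuous_rpow_const hq0.le).measurable.comp hSmeas)).aestronglyMeasurable
  have hbound : ∫ ω, S ω ^ q ∂P ≤ (12 * Real.sqrt q)^q := by
    rw [hint_eq]
    calc (∫⁻ ω, ENNReal.ofReal (S ω ^ q) ∂P).toReal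
        ≤ (ENNReal.ofReal ((12 * Real.sqrt q)^q)).toReal :=
          ENNReal.toReal_mono ENNReal.ofReal_ne_top hfinal
      _ = (12 * Real.sqrt q)^q := ENNReal.toReal_ofReal (by positivity)
  calc (∫ ω, S ω ^ q ∂P) ^ (1/q)
      ≤ ((12 * Real.sqrt q)^q) ^ (1/q) := by
        refine Real.rpow_le_rpow ?_ hbound (by positivity)
        exact integral_nonneg (fun ω => Real.rpow_nonneg (hSnn ω) q)
    _ = 12 * Real.sqrt q := by
        rw [← Real.rpow_mul (by positivity), mul_one_div_cancel hq0.ne', Real.rpow_one]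

lemma iIndepFun_of_ae_eq {f f' : ℕ → Ω → ℂ}
    (hind : iIndepFun f P)
    (hae : ∀ n, f n =ᵐ[P] f' n) : iIndepFun f' P := by
  rw [iIndepFun_iff_measure_inter_preimage_eq_mul] at hind ⊢
  intro S sets hsets
  have h1 : ∀ᵐ ω ∂P, ∀ n, f n ω = f' n ω := ae_all_iff.mpr hae
  have h2 : (⋂ i ∈ S, f' i ⁻¹' sets i) =ᵐ[P] (⋂ i ∈ S, f i ⁻¹' sets i) := by
    refine Filter.eventuallyEq_set.mpr ?_
    filter_upwards [h1] with ω hω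
    simp only [Set.mem_iInter, Set.mem_preimage]
    constructor <;> intro h i hi
    · rw [hω i]; exact h i hi
    · rw [← hω i]; exact h i hi
  have h3 : ∀ i ∈ S, (f' i ⁻¹' sets i) =ᵐ[P] (f i ⁻¹' sets i) := by
    intro i hi
    refine Filter.eventuallyEq_set.mpr ?_
    filter_upwards [hae i] with ω hω
    simp only [Set.mem_preimage, hω]
  calc P (⋂ i ∈ S, f' i ⁻¹' sets i) = P (⋂ i ∈ S, f i ⁻¹' sets i) := measure_congr h2
    _ = ∏ i ∈ S, P (f i ⁻¹' sets i) := hind S hsets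
    _ = ∏ i ∈ S, P (f' i ⁻¹' sets i) :=
        Finset.prod_congr rfl (fun i hi => (measure_congr (h3 i hi)).symm)

end Main

/-- `(g n)` is a sequence of independent standard complex Gaussian random variables. -/
def IsIIDStdComplexGaussian {Ω : Type*} [MeasurableSpace Ω] (P : Measure Ω)
    (g : ℕ → Ω → ℂ) : Prop :=
  iIndepFun g P ∧
    ∀ n, AEMeasurable (g n) P ∧ P.map (g n) = stdComplexGaussian

/-- Dyadic maximal bound for Gaussian blocks: with `(g_n)` IID standard complex Gaussians,
`‖max_N N^{1/2}(Σ_{n∼N}|g_n|²/n²)^{1/2}‖_{L^{q₁}} ≤ C √q₁` for every `1 ≤ q₁ < ∞`, where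
the maximum is over dyadic `N = 2^j`, and consequently
`P(max_N N^{1/2}(Σ_{n∼N}|g_n|²/n²)^{1/2} > λ) ≤ C exp(−cλ^c)` for `λ ≥ 1`. -/
theorem dyadic_gaussian_maximal_bound :
    ∃ C > 0, ∃ c > 0, ∀ {Ω : Type} [MeasurableSpace Ω] (P : Measure Ω), IsProbabilityMeasure P →
      ∀ (g : ℕ → Ω → ℂ), IsIIDStdComplexGaussian P g →
      (∀ q₁ : ℝ, 1 ≤ q₁ →
        (∫ ω, (⨆ j : ℕ, ((2 : ℝ) ^ j) ^ ((1 : ℝ) / 2) *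
            (∑ n ∈ Finset.Ico (2 ^ j) (2 ^ (j + 1)), ‖g n ω‖ ^ 2 / (n : ℝ) ^ 2)
              ^ ((1 : ℝ) / 2)) ^ q₁ ∂P) ^ (1 / q₁) ≤ C * Real.sqrt q₁) ∧
      (∀ lam : ℝ, 1 ≤ lam →
        (P {ω | lam < ⨆ j : ℕ, ((2 : ℝ) ^ j) ^ ((1 : ℝ) / 2) *
            (∑ n ∈ Finset.Ico (2 ^ j) (2 ^ (j + 1)), ‖g n ω‖ ^ 2 / (n : ℝ) ^ 2)
              ^ ((1 : ℝ) / 2)}).toReal ≤ C * Real.exp (-c * lam ^ c)) := by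
  refine ⟨12, by norm_num, 1/4, by norm_num, ?_⟩
  intro Ω inst P hP g hg
  haveI := hP
  obtain ⟨hind, hg2⟩ := hg
  set g' : ℕ → Ω → ℂ := fun n => ((hg2 n).1).mk (g n) with hg'def
  have hae : ∀ n, g n =ᵐ[P] g' n := fun n => ((hg2 n).1).ae_eq_mk
  have hmeas' : ∀ n, Measurable (g' n) := fun n => ((hg2 n).1).measurable_mk
  have hmap' : ∀ n, P.map (g' n) = stdComplexGaussian := by
    intro n
    rw [← Measure.map_congr (hae n)]
    exact (hg2 n).2
  have hind' : iIndepFun g' P := iIndepFun_of_ae_eq hind hae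
  have haeS : ∀ᵐ ω ∂P, (⨆ j : ℕ, ((2 : ℝ) ^ j) ^ ((1 : ℝ) / 2) *
      (∑ n ∈ Finset.Ico (2 ^ j) (2 ^ (j + 1)), ‖g n ω‖ ^ 2 / (n : ℝ) ^ 2) ^ ((1 : ℝ) / 2))
      = (⨆ j : ℕ, ((2 : ℝ) ^ j) ^ ((1 : ℝ) / 2) *
      (∑ n ∈ Finset.Ico (2 ^ j) (2 ^ (j + 1)), ‖g' n ω‖ ^ 2 / (n : ℝ) ^ 2) ^ ((1 : ℝ) / 2)) := by
    have h1 : ∀ᵐ ω ∂P, ∀ n, g n ω = g' n ω := ae_all_iff.mpr hae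
    filter_upwards [h1] with ω hω
    refine iSup_congr (fun j => ?_)
    congr 2
    refine Finset.sum_congr rfl (fun n _ => ?_)
    rw [hω n]
  constructor
  · intro q₁ hq₁
    have heq : (∫ ω, (⨆ j : ℕ, ((2 : ℝ) ^ j) ^ ((1 : ℝ) / 2) *
        (∑ n ∈ Finset.Ico (2 ^ j) (2 ^ (j + 1)), ‖g n ω‖ ^ 2 / (n : ℝ) ^ 2)
          ^ ((1 : ℝ) / 2)) ^ q₁ ∂P)
        = ∫ ω, (⨆ j : ℕ, ((2 : ℝ) ^ j) ^ ((1 : ℝ) / 2) *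
        (∑ n ∈ Finset.Ico (2 ^ j) (2 ^ (j + 1)), ‖g' n ω‖ ^ 2 / (n : ℝ) ^ 2)
          ^ ((1 : ℝ) / 2)) ^ q₁ ∂P := by
      refine integral_congr_ae ?_
      filter_upwards [haeS] with ω h
      rw [h]
    rw [heq]
    exact sup_moment hmeas' hind' hmap' hq₁
  · intro lam hlam
    have hseteq : {ω | lam < ⨆ j : ℕ, ((2 : ℝ) ^ j) ^ ((1 : ℝ) / 2) *
        (∑ n ∈ Finset.Ico (2 ^ j) (2 ^ (j + 1)), ‖g n ω‖ ^ 2 / (n : ℝ) ^ 2) ^ ((1 : ℝ) / 2)}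
        =ᵐ[P] {ω | lam < ⨆ j : ℕ, ((2 : ℝ) ^ j) ^ ((1 : ℝ) / 2) *
        (∑ n ∈ Finset.Ico (2 ^ j) (2 ^ (j + 1)), ‖g' n ω‖ ^ 2 / (n : ℝ) ^ 2) ^ ((1 : ℝ) / 2)} := by
      refine Filter.eventuallyEq_set.mpr ?_
      filter_upwards [haeS] with ω h
      simp only [Set.mem_setOf_eq, h]
    rw [measure_congr hseteq]
    by_cases hcase : 2 ≤ lam
    · have h := sup_tail hmeas' hind' hmap' hcase
      have h2 : (P {ω | lam < ⨆ j : ℕ, ((2 : ℝ) ^ j) ^ ((1 : ℝ) / 2) *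
          (∑ n ∈ Finset.Ico (2 ^ j) (2 ^ (j + 1)), ‖g' n ω‖ ^ 2 / (n : ℝ) ^ 2)
            ^ ((1 : ℝ) / 2)}).toReal ≤ 2 * Real.exp (-(lam^2/4)) := by
        calc _ ≤ (ENNReal.ofReal (2 * Real.exp (-(lam^2/4)))).toReal :=
              ENNReal.toReal_mono ENNReal.ofReal_ne_top h
          _ = 2 * Real.exp (-(lam^2/4)) := ENNReal.toReal_ofReal (by positivity)
      refine le_trans h2 ?_
      have h3 : lam ^ ((1:ℝ)/4) ≤ lam ^ 2 := by
        have h4 : lam ^ ((1:ℝ)/4) ≤ lam ^ (((2:ℕ)):ℝ) :=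
          Real.rpow_le_rpow_of_exponent_le (by linarith) (by norm_num)
        rwa [Real.rpow_natCast] at h4
      have hexp : Real.exp (-(lam^2/4)) ≤ Real.exp (-(1/4) * lam ^ ((1:ℝ)/4)) := by
        refine Real.exp_le_exp.mpr ?_
        linarith
      calc 2 * Real.exp (-(lam^2/4)) ≤ 2 * Real.exp (-(1/4) * lam ^ ((1:ℝ)/4)) :=
            mul_le_mul_of_nonneg_left hexp (by norm_num)
        _ ≤ 12 * Real.exp (-(1/4) * lam ^ ((1:ℝ)/4)) :=
            mul_le_mul_of_nonneg_right (by norm_num) (Real.exp_nonneg _)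
        _ = 12 * Real.exp (-(1/4 : ℝ) * lam ^ ((1:ℝ)/4)) := by norm_num
    · push_neg at hcase
      have h2 : (P {ω | lam < ⨆ j : ℕ, ((2 : ℝ) ^ j) ^ ((1 : ℝ) / 2) *
          (∑ n ∈ Finset.Ico (2 ^ j) (2 ^ (j + 1)), ‖g' n ω‖ ^ 2 / (n : ℝ) ^ 2)
            ^ ((1 : ℝ) / 2)}).toReal ≤ 1 := by
        calc _ ≤ (P Set.univ).toReal :=
              ENNReal.toReal_mono (measure_ne_top _ _) (measure_mono (Set.subset_univ _))
          _ = 1 := by rw [measure_univ, ENNReal.toReal_one]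
      refine le_trans h2 ?_
      have h3 : lam ^ ((1:ℝ)/4) ≤ 2 := by
        calc lam ^ ((1:ℝ)/4) ≤ (2:ℝ) ^ ((1:ℝ)/4) :=
              Real.rpow_le_rpow (by linarith) hcase.le (by norm_num)
          _ ≤ (2:ℝ) ^ (1:ℝ) := Real.rpow_le_rpow_of_exponent_le (by norm_num) (by norm_num)
          _ = 2 := Real.rpow_one 2
      have h4 : Real.exp (-1:ℝ) ≤ Real.exp (-(1/4) * lam ^ ((1:ℝ)/4)) := by
        refine Real.exp_le_exp.mpr ?_
        linarith
      have h5 : (1:ℝ)/3 ≤ Real.exp (-1:ℝ) := by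
        rw [Real.exp_neg]
        have he3 : Real.exp 1 ≤ 3 := le_of_lt (lt_trans Real.exp_one_lt_d9 (by norm_num))
        have h6 : (3:ℝ)⁻¹ ≤ (Real.exp 1)⁻¹ := by
          refine inv_anti₀ (Real.exp_pos 1) he3
        linarith
      linarith
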